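/- For a connected graph G, ρ_e^o(G) = 1 if and only if G is a complete graph. -/

import Mathlib

/-- `e` is a common edge of `e₁` and `e₂` in `G`: `e` is an edge of `G` distinct from
`e₁, e₂` joining an endpoint of `e₁` to an endpoint of `e₂`. -/
def SimpleGraph.IsCommonEdge {V : Type*} (G : SimpleGraph V) (e e₁ e₂ : Sym2 V) : Prop :=
  e ∈ G.edgeSet ∧ e ≠ e₁ ∧ e ≠ e₂ ∧ ∃ a b, e = s(a, b) ∧ a ∈ e₁ ∧ b ∈ e₂

/-- `D` is an edge open packing set of `G`. -/
def SimpleGraph.IsEOPSet {V : Type*} (G : SimpleGraph V) (D : Set (Sym2 V)) : Prop :=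
  D ⊆ G.edgeSet ∧ ∀ e₁ ∈ D, ∀ e₂ ∈ D, e₁ ≠ e₂ → ∀ e, ¬ G.IsCommonEdge e e₁ e₂

/-- The edge open packing number `ρ_e^o(G)`. -/
noncomputable def SimpleGraph.eopNum {V : Type*} (G : SimpleGraph V) : ℕ :=
  sSup {n | ∃ D : Set (Sym2 V), G.IsEOPSet D ∧ D.ncard = n}

/-- `M` is an induced matching of `G`. -/
def SimpleGraph.IsInducedMatching {V : Type*} (G : SimpleGraph V) (M : Set (Sym2 V)) : Prop :=
  M ⊆ G.edgeSet ∧ (∀ e₁ ∈ M, ∀ e₂ ∈ M, e₁ ≠ e₂ → ∀ v, ¬(v ∈ e₁ ∧ v ∈ e₂)) ∧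
    (∀ e₁ ∈ M, ∀ e₂ ∈ M, e₁ ≠ e₂ → ∀ a b, a ∈ e₁ → b ∈ e₂ → ¬ G.Adj a b)

/-- The induced matching number of `G`. -/
noncomputable def SimpleGraph.imNum {V : Type*} (G : SimpleGraph V) : ℕ :=
  sSup {n | ∃ M : Set (Sym2 V), G.IsInducedMatching M ∧ M.ncard = n}

/-- In the complete graph, any two distinct edges sharing a vertex `w` have a common edge. -/
lemma shared_common {V : Type*} (w b d : V) (hwb : w ≠ b) (hwd : w ≠ d) (hbd : b ≠ d) :
    (⊤ : SimpleGraph V).IsCommonEdge s(b, d) s(w, b) s(w, d) := by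
  refine ⟨by simp [hbd], ?_, ?_, b, d, rfl, by simp, by simp⟩
  · intro hEq
    rcases Sym2.eq_iff.mp hEq with ⟨h1, h2⟩ | ⟨h1, h2⟩ <;> simp_all
  · intro hEq
    rcases Sym2.eq_iff.mp hEq with ⟨h1, h2⟩ | ⟨h1, h2⟩ <;> simp_all

/-- Any two distinct edges of the complete graph have a common edge. -/
lemma top_common {V : Type*} (e₁ e₂ : Sym2 V) (h1 : e₁ ∈ (⊤ : SimpleGraph V).edgeSet)
    (h2 : e₂ ∈ (⊤ : SimpleGraph V).edgeSet) (hne : e₁ ≠ e₂) :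
    ∃ e, (⊤ : SimpleGraph V).IsCommonEdge e e₁ e₂ := by
  induction e₁ using Sym2.inductionOn with
  | hf a b =>
    induction e₂ using Sym2.inductionOn with
    | hf c d =>
      rw [SimpleGraph.mem_edgeSet, SimpleGraph.top_adj] at h1 h2
      by_cases hac : a = c
      · subst hac
        have hbd : b ≠ d := fun h => hne (by rw [h])
        exact ⟨_, shared_common a b d h1 h2 hbd⟩
      by_cases had : a = d
      · subst had
        have hbc : b ≠ c := fun h => hne (by rw [h]; exact Sym2.eq_swap)
        have := shared_common a b c h1 (Ne.symm h2) hbc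
        rw [show s(a, c) = s(c, a) from Sym2.eq_swap] at this
        exact ⟨_, this⟩
      by_cases hbc : b = c
      · subst hbc
        have hadn : a ≠ d := had
        have := shared_common b a d (Ne.symm h1) h2 hadn
        rw [show s(b, a) = s(a, b) from Sym2.eq_swap] at this
        exact ⟨_, this⟩
      by_cases hbd : b = d
      · subst hbd
        have hacn : a ≠ c := hac
        have := shared_common b a c (Ne.symm h1) (Ne.symm h2) hacn
        rw [show s(b, a) = s(a, b) from Sym2.eq_swap,
            show s(b, c) = s(c, b) from Sym2.eq_swap] at this
        exact ⟨_, this⟩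
      · refine ⟨s(a, c), by simp [hac], ?_, ?_, a, c, rfl, by simp, by simp⟩
        · intro hEq
          rcases Sym2.eq_iff.mp hEq with ⟨hx, hy⟩ | ⟨hx, hy⟩ <;> simp_all
        · intro hEq
          rcases Sym2.eq_iff.mp hEq with ⟨hx, hy⟩ | ⟨hx, hy⟩ <;> simp_all

theorem stmt2 {V : Type*} [Fintype V] (G : SimpleGraph V) (hG : G.Connected)
    (he : G.edgeSet.Nonempty) : G.eopNum = 1 ↔ G = ⊤ := by
  classical
  set S : Set ℕ := {n | ∃ D : Set (Sym2 V), G.IsEOPSet D ∧ D.ncard = n} with hS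
  have hbdd : BddAbove S := by
    refine ⟨Nat.card (Sym2 V), ?_⟩
    rintro n ⟨D, _, rfl⟩
    calc D.ncard ≤ (Set.univ : Set (Sym2 V)).ncard :=
          Set.ncard_le_ncard (Set.subset_univ D) Set.finite_univ
      _ = Nat.card (Sym2 V) := Set.ncard_univ _
  have heop : G.eopNum = sSup S := rfl
  constructor
  · intro h
    rw [heop] at h
    by_contra hne
    -- get u v nonadjacent, distinct
    have : ∃ u v, u ≠ v ∧ ¬ G.Adj u v := by
      by_contra hall
      push_neg at hall
      apply hne
      refine le_antisymm le_top ?_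
      intro u v huv
      rw [SimpleGraph.top_adj] at huv
      exact hall u v huv
    obtain ⟨u, v, huv, hnadj⟩ := this
    -- distance at least 2
    have hd2 : 2 ≤ G.dist u v := by
      have h0 : G.dist u v ≠ 0 := fun h0 => huv (hG.dist_eq_zero_iff.mp h0)
      have h1 : G.dist u v ≠ 1 := fun h1 => hnadj (SimpleGraph.dist_eq_one_iff_adj.mp h1)
      omega
    obtain ⟨p, hp⟩ := (hG.preconnected u v).exists_walk_length_eq_dist
    -- p has at least two edges
    match p, hp with
    | SimpleGraph.Walk.nil, hp => simp at hp; rw [SimpleGraph.dist_self] at hd2; omega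
    | SimpleGraph.Walk.cons h SimpleGraph.Walk.nil, hp => simp at hp; omega
    | SimpleGraph.Walk.cons (v := z) h (SimpleGraph.Walk.cons (v := z') h' q), hp =>
      simp only [SimpleGraph.Walk.length_cons] at hp
      have hnadj2 : ¬ G.Adj u z' := by
        intro hadj
        have := G.dist_le (SimpleGraph.Walk.cons hadj q)
        simp only [SimpleGraph.Walk.length_cons] at this
        omega
      have huz' : u ≠ z' := by
        rintro rfl
        have := G.dist_le q
        omega
      -- the EOP set {s(u,z), s(z,z')}
      have hzne : s(u, z) ≠ s(z, z') := by
        intro hEq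
        rcases Sym2.eq_iff.mp hEq with ⟨hx, hy⟩ | ⟨hx, hy⟩
        · exact huz' (hx.trans hy)
        · exact huz' hx
      have hEOP : G.IsEOPSet {s(u, z), s(z, z')} := by
        constructor
        · rintro e (rfl | rfl)
          · exact h
          · exact h'
        · have key : ∀ e, ¬ G.IsCommonEdge e s(u, z) s(z, z') := by
            rintro e ⟨heE, he1, he2, x, y, rfl, hx, hy⟩
            rw [SimpleGraph.mem_edgeSet] at heE
            rw [Sym2.mem_iff] at hx hy
            rcases hx with rfl | rfl <;> rcases hy with rfl | rfl
            · exact he1 rfl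
            · exact hnadj2 heE
            · exact G.irrefl heE
            · exact he2 rfl
          rintro e₁ (rfl | rfl) e₂ (rfl | rfl) hnee e
          · exact absurd rfl hnee
          · exact key e
          · rintro ⟨heE, he1, he2, x, y, rfl, hx, hy⟩
            rw [SimpleGraph.mem_edgeSet] at heE
            rw [Sym2.mem_iff] at hx hy
            rcases hx with rfl | rfl <;> rcases hy with rfl | rfl
            · exact he2 Sym2.eq_swap
            · exact G.irrefl heE
            · exact hnadj2 (G.adj_symm heE)
            · exact he1 Sym2.eq_swap
          · exact absurd rfl hnee
      have h2S : (2 : ℕ) ∈ S := ⟨{s(u, z), s(z, z')}, hEOP, Set.ncard_pair hzne⟩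
      have := le_csSup hbdd h2S
      omega
  · rintro rfl
    obtain ⟨e, heE⟩ := he
    have h1S : (1 : ℕ) ∈ S := by
      refine ⟨{e}, ⟨by simpa using heE, ?_⟩, Set.ncard_singleton e⟩
      rintro e₁ rfl e₂ rfl hnee
      exact absurd rfl hnee
    have hub : ∀ n ∈ S, n ≤ 1 := by
      rintro n ⟨D, ⟨hDsub, hDpack⟩, rfl⟩
      rw [Set.ncard_le_one_iff (Set.toFinite D)]
      intro e₁ e₂ h1 h2
      by_contra hnee
      obtain ⟨f, hf⟩ := top_common e₁ e₂ (hDsub h1) (hDsub h2) hnee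
      exact hDpack e₁ h1 e₂ h2 hnee f hf
    rw [heop]
    exact le_antisymm (csSup_le ⟨1, h1S⟩ hub) (le_csSup hbdd h1S)
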